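/- In the edge gadget with parameter m ≥ 1 (so valuations involve 2m²), consider the assignment μ matching β↔η, γ↔α', δ↔α (the solid edges), with each matched buyer paying a price equal to their budget, so that matched buyer payoffs are π_β(η) = 2m²+3, π_γ(α') = 2m²+6, π_δ(α) = 2m²+7 and matched seller payoffs are π_α(δ) = 4, π_η(β) = 1, while unmatched agents receive payoff 0. Then no blocking pair of μ involves any agent from {β, γ, δ, α, η}. -/

import Mathlib

namespace EdgeGadget

/-- The five buyers of the edge gadget. -/
inductive Buyer : Type
  | β | γ | δ | ε | ε'
  deriving DecidableEq

instance : Fintype Buyer where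
  elems := {.β, .γ, .δ, .ε, .ε'}
  complete := by intro x; cases x <;> decide

/-- The three sellers of the edge gadget. -/
inductive Seller : Type
  | α | η | α'
  deriving DecidableEq

instance : Fintype Seller where
  elems := {.α, .η, .α'}
  complete := by intro x; cases x <;> decide

open Buyer Seller

/-- Buyer budgets. -/
def budget : Buyer → ℤ
  | .β => 9 | .γ => 7 | .δ => 9 | .ε => 8 | .ε' => 8

/-- Seller reserve values. -/
def reserve : Seller → ℤ
  | .α => 5 | .η => 8 | .α' => 1

/-- Buyer valuations, parametrized by `m` (written `k` here). -/
def val (k : ℤ) : Buyer → Seller → ℤ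
  | .β, .α => 0        | .β, .η => 2*k^2 + 12  | .β, .α' => 2*k^2 + 11
  | .γ, .α => 2*k^2 + 12 | .γ, .η => 0          | .γ, .α' => 2*k^2 + 13
  | .δ, .α => 2*k^2 + 16 | .δ, .η => 2*k^2 + 18 | .δ, .α' => 0
  | .ε, .α => 3        | .ε, .η => 0          | .ε, .α' => 0
  | .ε', .α => 0       | .ε', .η => 0         | .ε', .α' => 7

/-- A (partial) matching of buyers to sellers: no seller gets two buyers. -/
def IsMatching (μ : Buyer → Option Seller) : Prop :=
  ∀ i i' j, μ i = some j → μ i' = some j → i = i'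

/-- Payoff of buyer `i` under matching `μ`, with each matched buyer paying a price equal
to their budget: `v_i(j) - b^i` if matched to `j`, and `0` if unmatched. -/
def buyerPayoff (k : ℤ) (μ : Buyer → Option Seller) (i : Buyer) : ℤ :=
  match μ i with
  | some j => val k i j - budget i
  | none => 0

/-- Payoff of seller `j` under matching `μ`: `b^i - r_j` if matched to buyer `i`
(prices equal the matched buyer's budget), and `0` if unmatched. -/
def sellerPayoff (μ : Buyer → Option Seller) (j : Seller) : ℤ :=
  ∑ i : Buyer, if μ i = some j then budget i - reserve j else 0

/-- `(i,j)` is a blocking pair of `μ`: `π_i(j) > π_i(μ(i))` and `π_j(i) > π_j(μ⁻¹(j))`. -/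
def IsBlockingPair (k : ℤ) (μ : Buyer → Option Seller) (i : Buyer) (j : Seller) : Prop :=
  buyerPayoff k μ i < val k i j - budget i ∧
    sellerPayoff μ j < budget i - reserve j

/-- A matching is stable if it has no blocking pair. -/
def IsStable (k : ℤ) (μ : Buyer → Option Seller) : Prop :=
  IsMatching μ ∧ ∀ i j, ¬ IsBlockingPair k μ i j

/-- The "solid" matching: `β ↔ η`, `γ ↔ α'`, `δ ↔ α`; `ε`, `ε'` unmatched. -/
def solidMatch : Buyer → Option Seller
  | .β => some .η | .γ => some .α' | .δ => some .α | .ε => none | .ε' => none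

/-- In the edge gadget with parameter `m ≥ 1`, no blocking pair of the
solid matching (prices at the matched buyers' budgets) involves any agent from
`{β, γ, δ, α, η}`. -/
theorem solid_no_blocking_pair (k : ℤ) (hk : 1 ≤ k) :
    ∀ i j, IsBlockingPair k solidMatch i j →
      i ∉ ({.β, .γ, .δ} : Set Buyer) ∧ j ∉ ({.α, .η} : Set Seller) := by
  have hk2 : 1 ≤ k^2 := by nlinarith
  have hα : sellerPayoff solidMatch .α = 4 := by decide
  have hη : sellerPayoff solidMatch .η = 1 := by decide
  have hα' : sellerPayoff solidMatch .α' = 6 := by decide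
  intro i j h
  obtain ⟨h1, h2⟩ := h
  cases i <;> cases j <;>
    simp_all [buyerPayoff, solidMatch, val, budget, reserve, Set.mem_insert_iff] <;>
    nlinarith [sq_nonneg k]

end EdgeGadget
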